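/- Let m ≥ 2, let τ ∈ (0,1), let A and B be real m-th order n-dimensional tensors, and define F(x,t) = (t² B − A)x^{m−1} ∈ ℝⁿ, H_τ(x,t) ∈ ℝ^{n+1} with i-th component φ_τ(x_i, F_i(x,t)) for i = 1,…,n and last component xᵀx − 1, where φ_τ(a,b) = τ((a + b) − √(a² + b²)) + (1 − τ)max(a,0)max(b,0). Then the merit function Ψ_τ(z) := ½ H_τ(z)ᵀ H_τ(z) is continuously differentiable on all of ℝ^{n+1}. -/

import Mathlib

open Finset

/-- `(A x^{m-1})_i = ∑_{i₂,…,i_m} a_{i i₂…i_m} x_{i₂}⋯x_{i_m}`. -/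
noncomputable def tApply {m n : ℕ} (hm : 0 < m) (A : (Fin m → Fin n) → ℝ)
    (x : Fin n → ℝ) : Fin n → ℝ := fun i =>
  ∑ f : Fin m → Fin n,
    if f ⟨0, hm⟩ = i then A f * ∏ j : Fin m, (if (j : ℕ) = 0 then 1 else x (f j)) else 0

/-- The penalized Fischer–Burmeister function. -/
noncomputable def phiTau (τ a b : ℝ) : ℝ :=
  τ * ((a + b) - Real.sqrt (a ^ 2 + b ^ 2)) + (1 - τ) * (max a 0 * max b 0)

open Filter Topology Asymptotics

noncomputable def fstL : ℝ × ℝ →L[ℝ] ℝ := ContinuousLinearMap.fst ℝ ℝ ℝ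
noncomputable def sndL : ℝ × ℝ →L[ℝ] ℝ := ContinuousLinearMap.snd ℝ ℝ ℝ

noncomputable def rr (p : ℝ × ℝ) : ℝ := Real.sqrt (p.1 ^ 2 + p.2 ^ 2)

noncomputable def c1 (τ : ℝ) (p : ℝ × ℝ) : ℝ :=
  2 * phiTau τ p.1 p.2 *
    (τ * (1 - p.1 / rr p) + (1 - τ) * ((if 0 < p.1 then (1:ℝ) else 0) * max p.2 0))

noncomputable def c2 (τ : ℝ) (p : ℝ × ℝ) : ℝ :=
  2 * phiTau τ p.1 p.2 *
    (τ * (1 - p.2 / rr p) + (1 - τ) * (max p.1 0 * (if 0 < p.2 then (1:ℝ) else 0)))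

noncomputable def GG (τ : ℝ) (p : ℝ × ℝ) : ℝ × ℝ →L[ℝ] ℝ :=
  c1 τ p • fstL + c2 τ p • sndL

lemma contPhi (τ : ℝ) : Continuous fun p : ℝ × ℝ => phiTau τ p.1 p.2 := by
  unfold phiTau
  fun_prop

-- the little-o lemma
lemma hasFDerivAt_sq_zero {g : ℝ × ℝ → ℝ} {p : ℝ × ℝ} {K : ℝ}
    (hg : ∀ᶠ q in 𝓝 p, |g q| ≤ K * ‖q - p‖) :
    HasFDerivAt (fun q => g q ^ 2) (0 : ℝ × ℝ →L[ℝ] ℝ) p := by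
  have hgp : g p = 0 := by
    have h := hg.self_of_nhds
    simp only [sub_self, norm_zero, mul_zero] at h
    exact abs_eq_zero.mp (le_antisymm h (abs_nonneg _))
  rw [hasFDerivAt_iff_isLittleO_nhds_zero]
  have hg' : ∀ᶠ h : ℝ × ℝ in 𝓝 0, |g (p + h)| ≤ K * ‖h‖ := by
    have ht : Filter.Tendsto (fun h : ℝ × ℝ => p + h) (𝓝 0) (𝓝 p) := by
      have := (continuous_add_left p).tendsto (0 : ℝ × ℝ)
      rwa [add_zero] at this
    filter_upwards [ht.eventually hg] with h hh
    simpa using hh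
  rw [Asymptotics.isLittleO_iff]
  intro c hc
  have hd : (0:ℝ) < c / (K ^ 2 + 1) := by positivity
  have hsmall : ∀ᶠ h : ℝ × ℝ in 𝓝 0, ‖h‖ < c / (K ^ 2 + 1) := by
    filter_upwards [Metric.ball_mem_nhds (0 : ℝ × ℝ) hd] with h hh
    simpa [dist_zero_right] using hh
  filter_upwards [hg', hsmall] with h h1 h2
  have hn : (0:ℝ) ≤ ‖h‖ := norm_nonneg h
  have habs : 0 ≤ |g (p + h)| := abs_nonneg _
  have hsq : g (p + h) ^ 2 ≤ (K * ‖h‖) ^ 2 := by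
    calc g (p + h) ^ 2 = |g (p + h)| ^ 2 := (sq_abs _).symm
      _ ≤ (K * ‖h‖) ^ 2 := by nlinarith
  have h2' : ‖h‖ * (K ^ 2 + 1) < c := by
    rw [← lt_div_iff₀ (by positivity : (0:ℝ) < K ^ 2 + 1)]
    exact h2
  have key : ‖h‖ * (K ^ 2 + 1) * ‖h‖ ≤ c * ‖h‖ :=
    mul_le_mul_of_nonneg_right h2'.le hn
  simp only [hgp, ContinuousLinearMap.zero_apply, sub_zero, ne_eq, OfNat.ofNat_ne_zero,
    not_false_eq_true, zero_pow]
  rw [Real.norm_eq_abs, abs_of_nonneg (sq_nonneg _)]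
  nlinarith [sq_nonneg (‖h‖)]

lemma rr_nonneg (p : ℝ × ℝ) : 0 ≤ rr p := Real.sqrt_nonneg _

lemma abs_fst_le_rr (p : ℝ × ℝ) : |p.1| ≤ rr p := by
  rw [← Real.sqrt_sq_eq_abs]
  exact Real.sqrt_le_sqrt (by nlinarith [sq_nonneg p.2])

lemma rr_pos_of_fst {p : ℝ × ℝ} (h : p.1 ≠ 0) : 0 < rr p :=
  Real.sqrt_pos.mpr (by positivity)

lemma rr_pos_of_snd {p : ℝ × ℝ} (h : p.2 ≠ 0) : 0 < rr p :=
  Real.sqrt_pos.mpr (by positivity)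

lemma contRR : Continuous rr := by unfold rr; fun_prop

-- the factor `1 - a/r` is bounded by 2
lemma abs_one_sub_div_le (p : ℝ × ℝ) : |1 - p.1 / rr p| ≤ 2 := by
  rcases eq_or_lt_of_le (rr_nonneg p) with h | h
  · rw [← h, div_zero, sub_zero, abs_one]; norm_num
  · have h1 : |p.1 / rr p| ≤ 1 := by
      rw [abs_div, abs_of_pos h, div_le_one h]
      exact abs_fst_le_rr p
    calc |1 - p.1 / rr p| ≤ |1| + |p.1 / rr p| := abs_sub _ _
      _ ≤ 2 := by rw [abs_one]; linarith

-- Continuity of U := φ · (1 - a/r)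
lemma contU (τ : ℝ) : Continuous fun p : ℝ × ℝ => phiTau τ p.1 p.2 * (1 - p.1 / rr p) := by
  rw [continuous_iff_continuousAt]
  intro p
  by_cases hp : p = 0
  · subst hp
    have hU0 : phiTau τ (0:ℝ×ℝ).1 (0:ℝ×ℝ).2 * (1 - (0:ℝ×ℝ).1 / rr 0) = 0 := by
      simp [phiTau, rr]
    unfold ContinuousAt
    show Tendsto _ _ (𝓝 (phiTau τ (0:ℝ×ℝ).1 (0:ℝ×ℝ).2 * (1 - (0:ℝ×ℝ).1 / rr 0)))
    rw [hU0]
    rw [tendsto_zero_iff_norm_tendsto_zero]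
    apply squeeze_zero (g := fun q => |phiTau τ q.1 q.2| * 2) (fun t => norm_nonneg _)
    · intro q
      rw [Real.norm_eq_abs, abs_mul]
      exact mul_le_mul_of_nonneg_left (abs_one_sub_div_le q) (abs_nonneg _)
    · have : Filter.Tendsto (fun q : ℝ × ℝ => phiTau τ q.1 q.2) (𝓝 0) (𝓝 0) := by
        have := (contPhi τ).tendsto (0 : ℝ × ℝ)
        simpa [phiTau] using this
      simpa using (this.abs.mul_const 2)
  · have hr : rr p ≠ 0 := by
      rcases Prod.ext_iff.not.mp hp with h
      push_neg at h
      simp only [Prod.fst_zero, Prod.snd_zero] at h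
      by_cases h1 : p.1 = 0
      · exact (rr_pos_of_snd (h h1)).ne'
      · exact (rr_pos_of_fst h1).ne'
    exact ((contPhi τ).continuousAt).mul
      (continuousAt_const.sub (continuousAt_fst.div (contRR.continuousAt) hr))

lemma phiTau_zero_left {τ y : ℝ} (hy : 0 ≤ y) : phiTau τ 0 y = 0 := by
  unfold phiTau
  rw [show (0:ℝ)^2 + y^2 = y^2 by ring, Real.sqrt_sq hy]
  simp

lemma phi_mul_max_zero (τ y : ℝ) : phiTau τ 0 y * max y 0 = 0 := by
  rcases le_or_gt y 0 with h | h
  · rw [max_eq_right h, mul_zero]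
  · rw [phiTau_zero_left h.le, zero_mul]

lemma contW (τ : ℝ) :
    Continuous fun p : ℝ × ℝ => phiTau τ p.1 p.2 * ((if 0 < p.1 then (1:ℝ) else 0) * max p.2 0) := by
  rw [continuous_iff_continuousAt]
  intro p
  rcases lt_trichotomy p.1 0 with h | h | h
  · -- near p, q.1 < 0 so the function is 0
    have hev : ∀ᶠ q : ℝ × ℝ in 𝓝 p, q.1 < 0 :=
      Filter.eventually_of_mem ((isOpen_lt continuous_fst continuous_const).mem_nhds h)
        (fun q hq => hq)
    apply ContinuousAt.congr (continuousAt_const (y := (0:ℝ)))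
    filter_upwards [hev] with q hq
    rw [if_neg (by linarith), zero_mul, mul_zero]
  · -- p.1 = 0 : squeeze
    have hp : phiTau τ p.1 p.2 * ((if 0 < p.1 then (1:ℝ) else 0) * max p.2 0) = 0 := by
      rw [h, if_neg (lt_irrefl 0), zero_mul, mul_zero]
    unfold ContinuousAt
    show Tendsto _ _ (𝓝 (phiTau τ p.1 p.2 * ((if 0 < p.1 then (1:ℝ) else 0) * max p.2 0)))
    rw [hp]
    rw [tendsto_zero_iff_norm_tendsto_zero]
    apply squeeze_zero (g := fun q => ‖phiTau τ q.1 q.2 * max q.2 0‖) (fun t => norm_nonneg _)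
    · intro q
      simp only [Real.norm_eq_abs, abs_mul]
      have : |(if 0 < q.1 then (1:ℝ) else 0)| ≤ 1 := by split <;> simp
      nlinarith [abs_nonneg (phiTau τ q.1 q.2), abs_nonneg (max q.2 0),
        abs_nonneg (if 0 < q.1 then (1:ℝ) else 0),
        mul_le_mul_of_nonneg_right this (abs_nonneg (max q.2 0)),
        mul_le_mul_of_nonneg_left
          (mul_le_mul_of_nonneg_right this (abs_nonneg (max q.2 0)))
          (abs_nonneg (phiTau τ q.1 q.2))]
    · have hc : Continuous fun q : ℝ × ℝ => ‖phiTau τ q.1 q.2 * max q.2 0‖ :=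
        ((contPhi τ).mul (continuous_snd.max continuous_const)).norm
      have := hc.tendsto p
      rw [show ‖phiTau τ p.1 p.2 * max p.2 0‖ = 0 by
        rw [h]; rw [phi_mul_max_zero]; exact norm_zero] at this
      exact this
  · -- p.1 > 0 : near p the indicator is 1
    have hev : ∀ᶠ q : ℝ × ℝ in 𝓝 p, 0 < q.1 :=
      Filter.eventually_of_mem ((isOpen_lt continuous_const continuous_fst).mem_nhds h)
        (fun q hq => hq)
    apply ContinuousAt.congr
      (f := fun q : ℝ × ℝ => phiTau τ q.1 q.2 * (1 * max q.2 0))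
      (((contPhi τ).mul (continuous_const.mul (continuous_snd.max continuous_const))).continuousAt)
    filter_upwards [hev] with q hq
    rw [if_pos hq]

lemma phiTau_comm (τ a b : ℝ) : phiTau τ a b = phiTau τ b a := by
  unfold phiTau; rw [add_comm a b, add_comm (a^2) (b^2), mul_comm (max a 0)]

lemma rr_swap (p : ℝ × ℝ) : rr p.swap = rr p := by
  unfold rr; rw [Prod.fst_swap, Prod.snd_swap, add_comm]

lemma contC1 (τ : ℝ) : Continuous (c1 τ) := by
  have : c1 τ = fun p : ℝ × ℝ =>
      2 * τ * (phiTau τ p.1 p.2 * (1 - p.1 / rr p)) +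
      2 * (1 - τ) * (phiTau τ p.1 p.2 * ((if 0 < p.1 then (1:ℝ) else 0) * max p.2 0)) := by
    funext p; unfold c1; ring
  rw [this]
  exact (continuous_const.mul (contU τ)).add (continuous_const.mul (contW τ))

lemma c2_eq_c1_swap (τ : ℝ) (p : ℝ × ℝ) : c2 τ p = c1 τ p.swap := by
  unfold c1 c2
  rw [rr_swap, Prod.fst_swap, Prod.snd_swap, phiTau_comm]
  ring

lemma contC2 (τ : ℝ) : Continuous (c2 τ) := by
  have : c2 τ = (c1 τ) ∘ Prod.swap := by funext p; exact c2_eq_c1_swap τ p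
  rw [this]
  exact (contC1 τ).comp continuous_swap

lemma contGG (τ : ℝ) : Continuous (GG τ) := by
  unfold GG
  exact ((contC1 τ).smul continuous_const).add ((contC2 τ).smul continuous_const)

lemma hasDerivAt_max0 {a : ℝ} (ha : a ≠ 0) :
    HasDerivAt (fun x : ℝ => max x 0) (if 0 < a then (1:ℝ) else 0) a := by
  rcases ha.lt_or_gt with h | h
  · rw [if_neg (not_lt.mpr h.le)]
    apply (hasDerivAt_const a (0:ℝ)).congr_of_eventuallyEq
    filter_upwards [(isOpen_lt continuous_id continuous_const).mem_nhds
      (show a ∈ {x : ℝ | x < 0} from h)] with x hx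
    exact max_eq_right (le_of_lt hx)
  · rw [if_pos h]
    apply (hasDerivAt_id a).congr_of_eventuallyEq
    filter_upwards [(isOpen_lt continuous_const continuous_id).mem_nhds
      (show a ∈ {x : ℝ | 0 < x} from h)] with x hx
    exact max_eq_left (le_of_lt hx)

lemma hasFDerivAt_sq_sum (p : ℝ × ℝ) :
    HasFDerivAt (fun q : ℝ × ℝ => q.1 ^ 2 + q.2 ^ 2)
      ((p.1 • fstL + p.1 • fstL) + (p.2 • sndL + p.2 • sndL)) p := by
  have h := ((hasFDerivAt_fst (p := p) (𝕜 := ℝ)).mul (hasFDerivAt_fst (p := p))).add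
    ((hasFDerivAt_snd (p := p) (𝕜 := ℝ)).mul (hasFDerivAt_snd (p := p)))
  simp only [pow_two, fstL, sndL]
  exact h

lemma hasFDerivAt_phi_smooth {τ : ℝ} {p : ℝ × ℝ} (h1 : p.1 ≠ 0) (h2 : p.2 ≠ 0) :
    HasFDerivAt (fun q : ℝ × ℝ => phiTau τ q.1 q.2)
      (τ • ((fstL + sndL) -
          (1 / (2 * Real.sqrt (p.1 ^ 2 + p.2 ^ 2))) •
            ((p.1 • fstL + p.1 • fstL) + (p.2 • sndL + p.2 • sndL))) +
        (1 - τ) • (max p.1 0 • ((if 0 < p.2 then (1:ℝ) else 0) • sndL) +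
          max p.2 0 • ((if 0 < p.1 then (1:ℝ) else 0) • fstL))) p := by
  have hx : p.1 ^ 2 + p.2 ^ 2 ≠ 0 := by positivity
  have hs : HasFDerivAt (fun q : ℝ × ℝ => Real.sqrt (q.1 ^ 2 + q.2 ^ 2))
      ((1 / (2 * Real.sqrt (p.1 ^ 2 + p.2 ^ 2))) •
        ((p.1 • fstL + p.1 • fstL) + (p.2 • sndL + p.2 • sndL))) p :=
    (Real.hasDerivAt_sqrt hx).comp_hasFDerivAt p (hasFDerivAt_sq_sum p)
  have hlin : HasFDerivAt (fun q : ℝ × ℝ => q.1 + q.2) (fstL + sndL) p := by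
    exact (hasFDerivAt_fst (p := p) (𝕜 := ℝ)).add (hasFDerivAt_snd (p := p))
  have hmax1 : HasFDerivAt (fun q : ℝ × ℝ => max q.1 0)
      ((if 0 < p.1 then (1:ℝ) else 0) • fstL) p :=
    (hasDerivAt_max0 h1).comp_hasFDerivAt p (hasFDerivAt_fst (p := p))
  have hmax2 : HasFDerivAt (fun q : ℝ × ℝ => max q.2 0)
      ((if 0 < p.2 then (1:ℝ) else 0) • sndL) p :=
    (hasDerivAt_max0 h2).comp_hasFDerivAt p (hasFDerivAt_snd (p := p))
  have hm := hmax1.mul hmax2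
  have hφ := ((hlin.sub hs).const_mul τ).add (hm.const_mul (1 - τ))
  exact hφ

lemma sq_from_phi {τ : ℝ} {p : ℝ × ℝ} {D : ℝ × ℝ →L[ℝ] ℝ}
    (h : HasFDerivAt (fun q : ℝ × ℝ => phiTau τ q.1 q.2) D p)
    (hG : GG τ p = phiTau τ p.1 p.2 • D + phiTau τ p.1 p.2 • D) :
    HasFDerivAt (fun q : ℝ × ℝ => phiTau τ q.1 q.2 ^ 2) (GG τ p) p := by
  have h2 := h.mul h
  rw [hG]
  simp only [pow_two]
  exact h2

lemma caseI {τ : ℝ} {p : ℝ × ℝ} (h1 : p.1 ≠ 0) (h2 : p.2 ≠ 0) :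
    HasFDerivAt (fun q : ℝ × ℝ => phiTau τ q.1 q.2 ^ 2) (GG τ p) p := by
  apply sq_from_phi (hasFDerivAt_phi_smooth h1 h2)
  have hr : Real.sqrt (p.1 ^ 2 + p.2 ^ 2) ≠ 0 := (rr_pos_of_fst h1).ne'
  apply ContinuousLinearMap.ext
  intro q
  simp only [GG, c1, c2, rr, fstL, sndL, ContinuousLinearMap.add_apply,
    ContinuousLinearMap.coe_smul', Pi.smul_apply, ContinuousLinearMap.coe_fst',
    ContinuousLinearMap.coe_snd', smul_eq_mul, ContinuousLinearMap.coe_sub', Pi.sub_apply]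
  generalize (if 0 < p.1 then (1:ℝ) else 0) = e1
  generalize (if 0 < p.2 then (1:ℝ) else 0) = e2
  field_simp
  ring

lemma caseII {τ : ℝ} {p : ℝ × ℝ} (h1 : p.1 = 0) (h2 : p.2 < 0) :
    HasFDerivAt (fun q : ℝ × ℝ => phiTau τ q.1 q.2 ^ 2) (GG τ p) p := by
  have h2' : p.2 ≠ 0 := h2.ne
  have hx : p.1 ^ 2 + p.2 ^ 2 ≠ 0 := by positivity
  have hs : HasFDerivAt (fun q : ℝ × ℝ => Real.sqrt (q.1 ^ 2 + q.2 ^ 2))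
      ((1 / (2 * Real.sqrt (p.1 ^ 2 + p.2 ^ 2))) •
        ((p.1 • fstL + p.1 • fstL) + (p.2 • sndL + p.2 • sndL))) p :=
    (Real.hasDerivAt_sqrt hx).comp_hasFDerivAt p (hasFDerivAt_sq_sum p)
  have hlin : HasFDerivAt (fun q : ℝ × ℝ => q.1 + q.2) (fstL + sndL) p :=
    (hasFDerivAt_fst (p := p) (𝕜 := ℝ)).add (hasFDerivAt_snd (p := p))
  have hD := (hlin.sub hs).const_mul τ
  have hev : ∀ᶠ q : ℝ × ℝ in 𝓝 p, q.2 < 0 :=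
    Filter.eventually_of_mem ((isOpen_lt continuous_snd continuous_const).mem_nhds h2)
      (fun q hq => hq)
  have hφ : HasFDerivAt (fun q : ℝ × ℝ => phiTau τ q.1 q.2)
      (τ • ((fstL + sndL) -
        (1 / (2 * Real.sqrt (p.1 ^ 2 + p.2 ^ 2))) •
          ((p.1 • fstL + p.1 • fstL) + (p.2 • sndL + p.2 • sndL)))) p := by
    apply hD.congr_of_eventuallyEq
    filter_upwards [hev] with q hq
    unfold phiTau
    rw [max_eq_right hq.le, mul_zero, mul_zero, add_zero]
    rfl
  apply sq_from_phi hφ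
  have hr : Real.sqrt (p.1 ^ 2 + p.2 ^ 2) ≠ 0 := (rr_pos_of_snd h2.ne).ne'
  apply ContinuousLinearMap.ext
  intro q
  simp only [GG, c1, c2, rr, fstL, sndL, ContinuousLinearMap.add_apply,
    ContinuousLinearMap.coe_smul', Pi.smul_apply, ContinuousLinearMap.coe_fst',
    ContinuousLinearMap.coe_snd', smul_eq_mul, ContinuousLinearMap.coe_sub', Pi.sub_apply,
    h1, if_neg (lt_irrefl (0:ℝ)), if_neg (not_lt.mpr h2.le), max_eq_right h2.le]
  generalize (max (0:ℝ) 0) = e1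
  field_simp
  ring

lemma phiTau_sq_swap (τ : ℝ) :
    (fun q : ℝ × ℝ => phiTau τ q.1 q.2 ^ 2) =
      (fun q : ℝ × ℝ => phiTau τ q.1 q.2 ^ 2) ∘ Prod.swap := by
  funext q
  simp only [Function.comp_apply, Prod.fst_swap, Prod.snd_swap]
  rw [phiTau_comm]

lemma GG_swap (τ : ℝ) (p : ℝ × ℝ) :
    GG τ p = (GG τ p.swap).comp ((ContinuousLinearEquiv.prodComm ℝ ℝ ℝ).toContinuousLinearMap) := by
  apply ContinuousLinearMap.ext
  intro q
  have hc1 : c1 τ p = c2 τ p.swap := by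
    rw [c2_eq_c1_swap, Prod.swap_swap]
  have hc2 : c2 τ p = c1 τ p.swap := (c2_eq_c1_swap τ p)
  simp [GG, fstL, sndL, hc1, hc2]
  ring

lemma caseIII {τ : ℝ} {p : ℝ × ℝ} (h1 : p.1 < 0) (h2 : p.2 = 0) :
    HasFDerivAt (fun q : ℝ × ℝ => phiTau τ q.1 q.2 ^ 2) (GG τ p) p := by
  have hswap : HasFDerivAt (fun q : ℝ × ℝ => phiTau τ q.1 q.2 ^ 2) (GG τ p.swap) p.swap :=
    caseII (by simpa using h2) (by simpa using h1)
  have hcomp := hswap.comp p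
    (((ContinuousLinearEquiv.prodComm ℝ ℝ ℝ).toContinuousLinearMap).hasFDerivAt (x := p))
  rw [GG_swap τ p]
  apply hcomp.congr_of_eventuallyEq
  apply Filter.Eventually.of_forall
  intro q
  simp only [Function.comp_apply, Prod.fst_swap, Prod.snd_swap]
  rw [phiTau_comm]

lemma phiTau_zero_right {τ x : ℝ} (hx : 0 ≤ x) : phiTau τ x 0 = 0 := by
  rw [phiTau_comm]; exact phiTau_zero_left hx

lemma sqrt_le_abs_add {x y : ℝ} (hy : 0 ≤ y) : Real.sqrt (x^2 + y^2) ≤ |x| + y := by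
  have h : x^2 + y^2 ≤ (|x| + y)^2 := by nlinarith [sq_abs x, abs_nonneg x]
  calc Real.sqrt (x^2+y^2) ≤ Real.sqrt ((|x|+y)^2) := Real.sqrt_le_sqrt h
    _ = |x| + y := Real.sqrt_sq (by positivity)

lemma le_sqrt_self {x y : ℝ} (hy : 0 ≤ y) : y ≤ Real.sqrt (x^2 + y^2) := by
  calc y = Real.sqrt (y^2) := (Real.sqrt_sq hy).symm
    _ ≤ Real.sqrt (x^2 + y^2) := Real.sqrt_le_sqrt (by nlinarith)

lemma abs_fb_le {x y : ℝ} (hy : 0 ≤ y) : |x + y - Real.sqrt (x^2 + y^2)| ≤ 2 * |x| := by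
  have h1 := sqrt_le_abs_add (x := x) hy
  have h2 := le_sqrt_self (x := x) hy
  have h3 := le_abs_self x
  have h4 := neg_abs_le x
  rw [abs_le]; constructor <;> linarith

lemma abs_fb_le' (x y : ℝ) : |x + y - Real.sqrt (x^2 + y^2)| ≤ 2 * (|x| + |y|) := by
  have h1 : Real.sqrt (x^2 + y^2) ≤ |x| + |y| := by
    calc Real.sqrt (x^2+y^2) ≤ Real.sqrt ((|x|+|y|)^2) :=
          Real.sqrt_le_sqrt (by nlinarith [sq_abs x, sq_abs y, abs_nonneg x, abs_nonneg y])
      _ = |x| + |y| := Real.sqrt_sq (by positivity)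
  have h2 : 0 ≤ Real.sqrt (x^2 + y^2) := Real.sqrt_nonneg _
  have h3 := le_abs_self x
  have h4 := neg_abs_le x
  have h5 := le_abs_self y
  have h6 := neg_abs_le y
  rw [abs_le]; constructor <;> linarith

lemma abs_phi_le_gen {τ x y : ℝ} (hτ0 : 0 ≤ τ) (hτ1 : τ ≤ 1) :
    |phiTau τ x y| ≤ |x + y - Real.sqrt (x^2 + y^2)| + max x 0 * max y 0 := by
  unfold phiTau
  have h2 : (0:ℝ) ≤ max x 0 * max y 0 := mul_nonneg (le_max_right _ _) (le_max_right _ _)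
  calc |τ * ((x + y) - Real.sqrt (x ^ 2 + y ^ 2)) + (1 - τ) * (max x 0 * max y 0)|
      ≤ |τ * ((x + y) - Real.sqrt (x ^ 2 + y ^ 2))| + |(1 - τ) * (max x 0 * max y 0)| :=
        abs_add_le _ _
    _ = τ * |(x + y) - Real.sqrt (x ^ 2 + y ^ 2)| + (1 - τ) * (max x 0 * max y 0) := by
        rw [abs_mul, abs_mul, abs_of_nonneg hτ0, abs_of_nonneg (by linarith : (0:ℝ) ≤ 1 - τ),
          abs_of_nonneg h2]
    _ ≤ |x + y - Real.sqrt (x^2 + y^2)| + max x 0 * max y 0 := by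
        have := abs_nonneg ((x + y) - Real.sqrt (x ^ 2 + y ^ 2))
        nlinarith

lemma abs_phi_le {τ x y : ℝ} (hτ0 : 0 ≤ τ) (hτ1 : τ ≤ 1) (hy : 0 ≤ y) :
    |phiTau τ x y| ≤ (2 + y) * |x| := by
  have h1 := abs_phi_le_gen (x := x) (y := y) hτ0 hτ1
  have h2 := abs_fb_le (x := x) hy
  have h3 : max x 0 * max y 0 ≤ |x| * y := by
    apply mul_le_mul (max_le (le_abs_self x) (abs_nonneg x)) (le_of_eq (max_eq_left hy))
      (le_max_right _ _) (abs_nonneg x)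
  nlinarith [abs_nonneg x]

lemma abs_phi_le' {τ x y : ℝ} (hτ0 : 0 ≤ τ) (hτ1 : τ ≤ 1) (hy : y < 0) :
    |phiTau τ x y| ≤ 2 * (|x| + |y|) := by
  have h1 := abs_phi_le_gen (x := x) (y := y) hτ0 hτ1
  have h2 := abs_fb_le' x y
  have h3 : max y 0 = 0 := max_eq_right hy.le
  rw [h3, mul_zero, add_zero] at h1
  linarith

lemma GG_eq_zero {τ : ℝ} {p : ℝ × ℝ} (h : phiTau τ p.1 p.2 = 0) : GG τ p = 0 := by
  unfold GG c1 c2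
  rw [h]
  simp

lemma norm_fst_le' (q : ℝ × ℝ) : |q.1| ≤ ‖q‖ := norm_fst_le q
lemma norm_snd_le' (q : ℝ × ℝ) : |q.2| ≤ ‖q‖ := norm_snd_le q

lemma caseIV_bound {τ : ℝ} (hτ0 : 0 ≤ τ) (hτ1 : τ ≤ 1) {p : ℝ × ℝ}
    (h : p.1 = 0 ∧ 0 ≤ p.2) :
    ∀ᶠ q in 𝓝 p, |phiTau τ q.1 q.2| ≤ (5 + p.2) * ‖q - p‖ := by
  obtain ⟨h1, h2⟩ := h
  filter_upwards [Metric.ball_mem_nhds p one_pos] with q hq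
  rw [Metric.mem_ball, dist_eq_norm] at hq
  have hn : (0:ℝ) ≤ ‖q - p‖ := norm_nonneg _
  have hq1 : |q.1| ≤ ‖q - p‖ := by
    have := norm_fst_le' (q - p)
    simpa [h1] using this
  have hq2 : |q.2 - p.2| ≤ ‖q - p‖ := by
    have := norm_snd_le' (q - p)
    simpa using this
  rcases le_or_gt 0 q.2 with hy | hy
  · have hb := abs_phi_le (x := q.1) hτ0 hτ1 hy
    have hyb : q.2 ≤ p.2 + 1 := by
      have := le_abs_self (q.2 - p.2)
      linarith
    calc |phiTau τ q.1 q.2| ≤ (2 + q.2) * |q.1| := hb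
      _ ≤ (3 + p.2) * ‖q - p‖ := by nlinarith [abs_nonneg q.1]
      _ ≤ (5 + p.2) * ‖q - p‖ := by nlinarith
  · have hb := abs_phi_le' (x := q.1) hτ0 hτ1 hy
    have hq2' : |q.2| ≤ ‖q - p‖ := by
      rw [abs_of_neg hy]
      have := le_abs_self (p.2 - q.2)
      rw [abs_sub_comm] at hq2
      linarith
    calc |phiTau τ q.1 q.2| ≤ 2 * (|q.1| + |q.2|) := hb
      _ ≤ 4 * ‖q - p‖ := by linarith
      _ ≤ (5 + p.2) * ‖q - p‖ := by nlinarith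

lemma caseIV {τ : ℝ} (hτ0 : 0 ≤ τ) (hτ1 : τ ≤ 1) {p : ℝ × ℝ}
    (h : p.1 = 0 ∧ 0 ≤ p.2) :
    HasFDerivAt (fun q : ℝ × ℝ => phiTau τ q.1 q.2 ^ 2) (GG τ p) p := by
  rw [GG_eq_zero (by rw [h.1]; exact phiTau_zero_left h.2)]
  exact hasFDerivAt_sq_zero (caseIV_bound hτ0 hτ1 h)

lemma caseIV' {τ : ℝ} (hτ0 : 0 ≤ τ) (hτ1 : τ ≤ 1) {p : ℝ × ℝ}
    (h : p.2 = 0 ∧ 0 ≤ p.1) :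
    HasFDerivAt (fun q : ℝ × ℝ => phiTau τ q.1 q.2 ^ 2) (GG τ p) p := by
  have hswap : HasFDerivAt (fun q : ℝ × ℝ => phiTau τ q.1 q.2 ^ 2) (GG τ p.swap) p.swap :=
    caseIV hτ0 hτ1 (by simpa using ⟨h.1, h.2⟩)
  have hcomp := hswap.comp p
    (((ContinuousLinearEquiv.prodComm ℝ ℝ ℝ).toContinuousLinearMap).hasFDerivAt (x := p))
  rw [GG_swap τ p]
  apply hcomp.congr_of_eventuallyEq
  apply Filter.Eventually.of_forall
  intro q
  simp only [Function.comp_apply, Prod.fst_swap, Prod.snd_swap]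
  rw [phiTau_comm]

lemma keyC1 {τ : ℝ} (hτ0 : 0 ≤ τ) (hτ1 : τ ≤ 1) :
    ContDiff ℝ 1 (fun p : ℝ × ℝ => phiTau τ p.1 p.2 ^ 2) := by
  rw [contDiff_one_iff_hasFDerivAt]
  refine ⟨GG τ, contGG τ, fun p => ?_⟩
  by_cases h1 : p.1 = 0
  · rcases lt_or_ge p.2 0 with h2 | h2
    · exact caseII h1 h2
    · exact caseIV hτ0 hτ1 ⟨h1, h2⟩
  · by_cases h2 : p.2 = 0
    · rcases lt_or_ge p.1 0 with h1' | h1'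
      · exact caseIII h1' h2
      · exact caseIV' hτ0 hτ1 ⟨h2, h1'⟩
    · exact caseI h1 h2

/-- for `τ ∈ (0,1)`, the merit function `Ψ_τ(z) = ½ H_τ(z)ᵀ H_τ(z)`, where
`H_τ(x,t) = (φ_τ(x_i, ((t²B - A)x^{m-1})_i)_{i=1..n}, xᵀx - 1)`, is continuously
differentiable on all of `ℝ^{n+1}`. -/
theorem stmt_14 {m n : ℕ} (hm : 2 ≤ m) (τ : ℝ) (hτ : τ ∈ Set.Ioo (0 : ℝ) 1)
    (A B : (Fin m → Fin n) → ℝ) :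
    ContDiff ℝ 1 (fun z : (Fin n → ℝ) × ℝ =>
      (1 / 2 : ℝ) *
        ((∑ i, (phiTau τ (z.1 i)
            (tApply (show 0 < m by omega) (fun f => z.2 ^ 2 * B f - A f) z.1 i)) ^ 2)
          + ((∑ i, z.1 i * z.1 i) - 1) ^ 2)) := by
  obtain ⟨hτ0, hτ1⟩ := hτ
  have key := keyC1 (τ := τ) hτ0.le hτ1.le
  apply ContDiff.mul contDiff_const
  apply ContDiff.add
  · apply ContDiff.sum
    intro i _
    have inner : ContDiff ℝ 1 (fun z : (Fin n → ℝ) × ℝ =>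
        ((z.1 i, tApply (show 0 < m by omega) (fun f => z.2 ^ 2 * B f - A f) z.1 i) : ℝ × ℝ)) := by
      apply ContDiff.prodMk
      · exact (ContinuousLinearMap.proj i : (Fin n → ℝ) →L[ℝ] ℝ).contDiff.comp contDiff_fst
      · unfold tApply
        apply ContDiff.sum
        intro f _
        by_cases hf : f ⟨0, show 0 < m by omega⟩ = i
        · simp only [hf, if_true]
          apply ContDiff.mul
          · exact ((contDiff_snd.pow 2).mul contDiff_const).sub contDiff_const
          · apply contDiff_prod
            intro j _
            by_cases hj : (j : ℕ) = 0
            · simp only [hj, if_true]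
              exact contDiff_const
            · simp only [hj, if_false]
              exact (ContinuousLinearMap.proj (f j) : (Fin n → ℝ) →L[ℝ] ℝ).contDiff.comp contDiff_fst
        · simp only [hf, if_false]
          exact contDiff_const
    exact key.comp inner
  · apply ContDiff.pow
    apply ContDiff.sub _ contDiff_const
    apply ContDiff.sum
    intro i _
    exact ((ContinuousLinearMap.proj i : (Fin n → ℝ) →L[ℝ] ℝ).contDiff.comp contDiff_fst).mul
      ((ContinuousLinearMap.proj i : (Fin n → ℝ) →L[ℝ] ℝ).contDiff.comp contDiff_fst)
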